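/- arXiv:1408.2414 — 5 statements merged into one kernel-verified Lean document; each statement's English description precedes it below -/
import Mathlib

section
/- Let n ≥ 1 and let A be an invertible n×n real matrix such that there exists a constant K ≥ 1 with ‖A^m‖^n ≤ K·|det(A^m)| for all positive integers m, where ‖·‖ denotes the operator norm with respect to the Euclidean norm on ℝ^n. Then any two roots (in ℂ) of the characteristic polynomial of A have the same absolute value, and A, regarded as a complex matrix, is diagonalizable over ℂ (i.e., similar over ℂ to a diagonal matrix). -/
/-- Operator norm of a real matrix acting on Euclidean space. -/
noncomputable def euclideanOpNorm {n : ℕ} (A : Matrix (Fin n) (Fin n) ℝ) : ℝ :=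
  ‖Matrix.toEuclideanCLM (𝕜 := ℝ) A‖

lemma real_mulVec_bound {n : ℕ} (M : Matrix (Fin n) (Fin n) ℝ) (x : Fin n → ℝ) :
    ∑ j, (M.mulVec x j) ^ 2 ≤ euclideanOpNorm M ^ 2 * ∑ j, (x j) ^ 2 := by
  have h := (Matrix.toEuclideanCLM (𝕜 := ℝ) M).le_opNorm ((WithLp.equiv 2 (Fin n → ℝ)).symm x)
  rw [show (WithLp.equiv 2 (Fin n → ℝ)).symm x = WithLp.toLp 2 x from rfl, Matrix.toEuclideanCLM_toLp] at h
  have hx : ‖(WithLp.equiv 2 (Fin n → ℝ)).symm x‖ ^ 2 = ∑ j, (x j) ^ 2 := by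
    rw [EuclideanSpace.norm_eq, Real.sq_sqrt (by positivity)]
    simp [sq_abs]
  have hMx : ‖(WithLp.equiv 2 (Fin n → ℝ)).symm (M.mulVec x)‖ ^ 2 = ∑ j, (M.mulVec x j) ^ 2 := by
    rw [EuclideanSpace.norm_eq, Real.sq_sqrt (by positivity)]
    simp [sq_abs]
  calc ∑ j, (M.mulVec x j) ^ 2 = ‖(WithLp.equiv 2 (Fin n → ℝ)).symm (M.mulVec x)‖ ^ 2 := hMx.symm
    _ ≤ (euclideanOpNorm M * ‖(WithLp.equiv 2 (Fin n → ℝ)).symm x‖) ^ 2 := by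
        exact pow_le_pow_left₀ (norm_nonneg _) h 2
    _ = euclideanOpNorm M ^ 2 * ∑ j, (x j) ^ 2 := by rw [mul_pow, hx]

lemma complex_mulVec_bound {n : ℕ} (M : Matrix (Fin n) (Fin n) ℝ) (v : Fin n → ℂ) :
    ∑ j, Complex.normSq ((M.map Complex.ofReal).mulVec v j) ≤
      euclideanOpNorm M ^ 2 * ∑ j, Complex.normSq (v j) := by
  set x : Fin n → ℝ := fun j => (v j).re with hx
  set y : Fin n → ℝ := fun j => (v j).im with hy
  have hre : ∀ j, ((M.map Complex.ofReal).mulVec v j).re = M.mulVec x j := by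
    intro j
    simp [Matrix.mulVec, Matrix.map, dotProduct, Complex.re_sum, hx]
  have him : ∀ j, ((M.map Complex.ofReal).mulVec v j).im = M.mulVec y j := by
    intro j
    simp [Matrix.mulVec, Matrix.map, dotProduct, Complex.im_sum, hy]
  have key : ∀ j, Complex.normSq ((M.map Complex.ofReal).mulVec v j)
      = (M.mulVec x j) ^ 2 + (M.mulVec y j) ^ 2 := by
    intro j; rw [Complex.normSq_apply, hre, him]; ring
  have kv : ∀ j, Complex.normSq (v j) = (x j) ^ 2 + (y j) ^ 2 := by
    intro j; rw [Complex.normSq_apply]; ring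
  simp only [key, kv, Finset.sum_add_distrib, mul_add]
  exact add_le_add (real_mulVec_bound M x) (real_mulVec_bound M y)

lemma charpoly_isRoot_iff {n : ℕ} (B : Matrix (Fin n) (Fin n) ℂ) (μ : ℂ) :
    B.charpoly.IsRoot μ ↔ ∃ v : Fin n → ℂ, v ≠ 0 ∧ B.mulVec v = μ • v := by
  have hmap : (Matrix.charmatrix B).map (Polynomial.evalRingHom μ) =
      μ • (1 : Matrix (Fin n) (Fin n) ℂ) - B := by
    ext i j
    by_cases h : i = j
    · subst h; simp [Matrix.charmatrix_apply_eq, Matrix.smul_apply]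
    · simp [Matrix.charmatrix_apply_ne _ _ _ h, Matrix.one_apply_ne h, Matrix.smul_apply, h]
  have heval : B.charpoly.eval μ = (μ • (1 : Matrix (Fin n) (Fin n) ℂ) - B).det := by
    rw [Matrix.charpoly, ← hmap]
    exact RingHom.map_det (Polynomial.evalRingHom μ) _
  rw [Polynomial.IsRoot, heval]
  rw [← Matrix.exists_mulVec_eq_zero_iff]
  constructor
  · rintro ⟨v, hv, h⟩
    refine ⟨v, hv, ?_⟩
    rw [Matrix.sub_mulVec, sub_eq_zero, Matrix.smul_mulVec, Matrix.one_mulVec] at h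
    exact h.symm
  · rintro ⟨v, hv, h⟩
    refine ⟨v, hv, ?_⟩
    rw [Matrix.sub_mulVec, sub_eq_zero, Matrix.smul_mulVec, Matrix.one_mulVec, h]

lemma map_ofReal_pow {n : ℕ} (A : Matrix (Fin n) (Fin n) ℝ) (m : ℕ) :
    (A ^ m).map Complex.ofReal = (A.map Complex.ofReal) ^ m := by
  have : ∀ C : Matrix (Fin n) (Fin n) ℝ, C.map Complex.ofReal =
      Complex.ofRealHom.mapMatrix C := fun _ => rfl
  rw [this, this, map_pow]

lemma mulVec_pow_eig {n : ℕ} (B : Matrix (Fin n) (Fin n) ℂ) {μ : ℂ} {v : Fin n → ℂ}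
    (h : B.mulVec v = μ • v) (m : ℕ) : (B ^ m).mulVec v = μ ^ m • v := by
  induction m with
  | zero => simp
  | succ m ih =>
    rw [pow_succ, ← Matrix.mulVec_mulVec, h, Matrix.mulVec_smul, ih, smul_smul, pow_succ,
      mul_comm]

lemma sum_normSq_pos {n : ℕ} {v : Fin n → ℂ} (hv : v ≠ 0) :
    0 < ∑ j, Complex.normSq (v j) := by
  rcases Function.ne_iff.mp hv with ⟨j, hj⟩
  have h1 : 0 < Complex.normSq (v j) := Complex.normSq_pos.mpr hj
  exact lt_of_lt_of_le h1 (Finset.single_le_sum (fun i _ => Complex.normSq_nonneg _)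
    (Finset.mem_univ j))

lemma eig_pow_lb {n : ℕ} (A : Matrix (Fin n) (Fin n) ℝ) {μ : ℂ} {v : Fin n → ℂ} (hv : v ≠ 0)
    (h : (A.map Complex.ofReal).mulVec v = μ • v) (m : ℕ) :
    ‖μ‖ ^ m ≤ euclideanOpNorm (A ^ m) := by
  have hb := complex_mulVec_bound (A ^ m) v
  rw [map_ofReal_pow, mulVec_pow_eig _ h] at hb
  have hS := sum_normSq_pos hv
  have hsum : ∑ j, Complex.normSq ((μ ^ m • v) j) =
      Complex.normSq (μ ^ m) * ∑ j, Complex.normSq (v j) := by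
    rw [Finset.mul_sum]
    exact Finset.sum_congr rfl fun j _ => by simp [Complex.normSq_mul]
  rw [hsum] at hb
  have h2 : Complex.normSq (μ ^ m) ≤ euclideanOpNorm (A ^ m) ^ 2 :=
    le_of_mul_le_mul_right (by linarith [hb]) hS
  have h3 : Complex.normSq (μ ^ m) = (‖μ‖ ^ m) ^ 2 := by
    rw [← Complex.sq_norm, norm_pow]
  rw [h3] at h2
  exact (pow_le_pow_iff_left₀ (by positivity) (norm_nonneg _) two_ne_zero).mp h2

lemma abs_multiset_prod (s : Multiset ℂ) :
    ‖s.prod‖ = (s.map (‖·‖)).prod := by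
  induction s using Multiset.induction_on with
  | empty => simp
  | cons a s ih => rw [Multiset.prod_cons, norm_mul, Multiset.map_cons, Multiset.prod_cons, ih]

lemma prod_le_pow_card' (s : Multiset ℝ) (a : ℝ) (h : ∀ x ∈ s, 0 ≤ x ∧ x ≤ a) :
    s.prod ≤ a ^ Multiset.card s := by
  induction s using Multiset.induction_on with
  | empty => simp
  | cons b s ih =>
    have hb := h b (Multiset.mem_cons_self b s)
    have hs : ∀ x ∈ s, 0 ≤ x ∧ x ≤ a := fun x hx => h x (Multiset.mem_cons_of_mem hx)
    have hsp : 0 ≤ s.prod := Multiset.prod_nonneg (fun x hx => (hs x hx).1)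
    have hsa : s.prod ≤ a ^ Multiset.card s := ih hs
    rw [Multiset.prod_cons, Multiset.card_cons, pow_succ']
    exact mul_le_mul hb.2 hsa hsp (le_trans hb.1 hb.2)


lemma enorm_sq {n : ℕ} (u : Fin n → ℂ) :
    ‖(WithLp.equiv 2 (Fin n → ℂ)).symm u‖ ^ 2 = ∑ j, Complex.normSq (u j) := by
  rw [EuclideanSpace.norm_eq, Real.sq_sqrt (by positivity)]
  refine Finset.sum_congr rfl fun j _ => ?_
  rw [Complex.sq_norm]
  rfl

lemma gen_pow_formula {n : ℕ} (B : Matrix (Fin n) (Fin n) ℂ) {μ : ℂ} {v w : Fin n → ℂ}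
    (hBv : B.mulVec v = μ • v + w) (hw : B.mulVec w = μ • w) :
    ∀ m : ℕ, 1 ≤ m → (B ^ m).mulVec v = μ ^ m • v + ((m : ℂ) * μ ^ (m - 1)) • w := by
  intro m hm
  induction m, hm using Nat.le_induction with
  | base => simpa using hBv
  | succ m hm ih =>
    have hμpow : μ ^ (m - 1) * μ = μ ^ m := by
      conv_rhs => rw [show m = (m - 1) + 1 by omega]
      rw [pow_succ]
    calc (B ^ (m + 1)).mulVec v = B.mulVec ((B ^ m).mulVec v) := by
          rw [pow_succ', Matrix.mulVec_mulVec]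
      _ = μ ^ m • (μ • v + w) + ((m : ℂ) * μ ^ (m - 1)) • (μ • w) := by
          rw [ih, Matrix.mulVec_add, Matrix.mulVec_smul, Matrix.mulVec_smul, hBv, hw]
      _ = μ ^ (m + 1) • v + (((m : ℕ) + 1 : ℕ) * μ ^ ((m + 1) - 1)) • w := by
          push_cast
          simp only [smul_add, smul_smul, Nat.add_sub_cancel, Nat.cast_add, Nat.cast_one]
          rw [← pow_succ, add_assoc, ← add_smul]
          congr 1
          rw [mul_assoc, hμpow]
          ring

/-- A uniformly power-bounded (relative to `ρ^m`) matrix has no generalized eigenvectors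
of order two for eigenvalues of modulus `ρ`. -/
lemma no_gen_eig {n : ℕ} (A : Matrix (Fin n) (Fin n) ℝ) (K ρ : ℝ) (hρpos : 0 < ρ)
    (hNle : ∀ m : ℕ, 0 < m → euclideanOpNorm (A ^ m) ≤ K * ρ ^ m)
    (habs : ∀ (μ : ℂ) (u : Fin n → ℂ), u ≠ 0 →
      (A.map Complex.ofReal).mulVec u = μ • u → ‖μ‖ = ρ)
    (μ : ℂ) (v : Fin n → ℂ)
    (hw : (A.map Complex.ofReal).mulVec ((A.map Complex.ofReal).mulVec v - μ • v) =
      μ • ((A.map Complex.ofReal).mulVec v - μ • v)) :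
    (A.map Complex.ofReal).mulVec v - μ • v = 0 := by
  set B := A.map Complex.ofReal with hB
  by_contra hw0
  set w := B.mulVec v - μ • v with hwdef
  have hμρ : ‖μ‖ = ρ := habs μ w hw0 hw
  have hBv : B.mulVec v = μ • v + w := by rw [hwdef]; abel
  have hpow := gen_pow_formula B hBv hw
  set E := fun u : Fin n → ℂ => (WithLp.equiv 2 (Fin n → ℂ)).symm u with hE
  have hEnorm : ∀ u : Fin n → ℂ, ‖E u‖ ^ 2 = ∑ j, Complex.normSq (u j) := fun u => enorm_sq u
  have hEbound : ∀ m, 0 < m → ‖E ((B ^ m).mulVec v)‖ ≤ (K * ρ ^ m) * ‖E v‖ := by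
    intro m hm
    have h1 := complex_mulVec_bound (A ^ m) v
    rw [map_ofReal_pow, ← hB] at h1
    have h2 : ‖E ((B ^ m).mulVec v)‖ ^ 2 ≤ ((K * ρ ^ m) * ‖E v‖) ^ 2 := by
      rw [hEnorm, mul_pow, hEnorm]
      calc ∑ j, Complex.normSq ((B ^ m).mulVec v j)
          ≤ euclideanOpNorm (A ^ m) ^ 2 * ∑ j, Complex.normSq (v j) := h1
        _ ≤ (K * ρ ^ m) ^ 2 * ∑ j, Complex.normSq (v j) := by
            refine mul_le_mul_of_nonneg_right
              (pow_le_pow_left₀ (norm_nonneg _) (hNle m hm) 2) ?_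
            exact Finset.sum_nonneg fun j _ => Complex.normSq_nonneg _
    have hKρ : 0 ≤ K * ρ ^ m := by
      have h0 : (0:ℝ) ≤ euclideanOpNorm (A ^ m) := norm_nonneg _
      nlinarith [hNle m hm]
    exact (pow_le_pow_iff_left₀ (norm_nonneg _) (mul_nonneg hKρ (norm_nonneg _)) two_ne_zero).mp h2
  have hEadd : ∀ u₁ u₂ : Fin n → ℂ, E (u₁ + u₂) = E u₁ + E u₂ := fun _ _ => rfl
  have hEsmul : ∀ (c : ℂ) (u : Fin n → ℂ), E (c • u) = c • E u := fun _ _ => rfl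
  have hEw0 : E w ≠ 0 := by
    intro h
    exact hw0 ((WithLp.equiv 2 (Fin n → ℂ)).symm.injective h)
  have hWpos : 0 < ‖E w‖ := norm_pos_iff.mpr hEw0
  have hbd : ∀ m : ℕ, 1 ≤ m → (m : ℝ) * ‖E w‖ ≤ (K + 1) * ρ * ‖E v‖ := by
    intro m hm
    have h1 := hEbound m hm
    rw [hpow m hm, hEadd, hEsmul, hEsmul] at h1
    have h2 : ‖((m : ℂ) * μ ^ (m - 1)) • E w‖ ≤
        ‖μ ^ m • E v + ((m : ℂ) * μ ^ (m - 1)) • E w‖ + ‖μ ^ m • E v‖ := by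
      have heq : ((m : ℂ) * μ ^ (m - 1)) • E w =
          (μ ^ m • E v + ((m : ℂ) * μ ^ (m - 1)) • E w) - μ ^ m • E v := by abel
      conv_lhs => rw [heq]
      exact norm_sub_le _ _
    have h3 : ‖((m : ℂ) * μ ^ (m - 1)) • E w‖ = (m : ℝ) * ρ ^ (m - 1) * ‖E w‖ := by
      rw [norm_smul]
      congr 1
      rw [norm_mul, norm_pow, hμρ]
      congr 1
      simp
    have h4 : ‖μ ^ m • E v‖ = ρ ^ m * ‖E v‖ := by
      rw [norm_smul, norm_pow, hμρ]
    have h5 : (m : ℝ) * ρ ^ (m - 1) * ‖E w‖ ≤ (K + 1) * ρ ^ m * ‖E v‖ := by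
      rw [h3] at h2
      calc (m : ℝ) * ρ ^ (m - 1) * ‖E w‖
          ≤ (K * ρ ^ m) * ‖E v‖ + ρ ^ m * ‖E v‖ := by rw [← h4] at *; linarith [h1, h2]
        _ = (K + 1) * ρ ^ m * ‖E v‖ := by ring
    have hρm : ρ ^ m = ρ * ρ ^ (m - 1) := by
      conv_lhs => rw [show m = (m - 1) + 1 by omega]
      rw [pow_succ]
      ring
    rw [hρm] at h5
    have hpos : 0 < ρ ^ (m - 1) := by positivity
    have h6 : ((m : ℝ) * ‖E w‖) * ρ ^ (m - 1) ≤ ((K + 1) * ρ * ‖E v‖) * ρ ^ (m - 1) := by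
      calc ((m : ℝ) * ‖E w‖) * ρ ^ (m - 1) = (m : ℝ) * ρ ^ (m - 1) * ‖E w‖ := by ring
        _ ≤ (K + 1) * (ρ * ρ ^ (m - 1)) * ‖E v‖ := h5
        _ = ((K + 1) * ρ * ‖E v‖) * ρ ^ (m - 1) := by ring
    exact (mul_le_mul_iff_of_pos_right hpos).mp h6
  obtain ⟨m, hm⟩ := exists_nat_gt (((K + 1) * ρ * ‖E v‖) / ‖E w‖)
  have hm1 : 1 ≤ m + 1 := by omega
  have h1 := hbd (m + 1) hm1
  have h2 : ((K + 1) * ρ * ‖E v‖) / ‖E w‖ < (m : ℝ) + 1 := by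
    linarith
  rw [div_lt_iff₀ hWpos] at h2
  push_cast at h1
  linarith

/-- A matrix with no order-two generalized eigenvectors is diagonalizable over `ℂ`. -/
lemma diag_of_no_gen_eig {n : ℕ} (B : Matrix (Fin n) (Fin n) ℂ)
    (key2 : ∀ (μ : ℂ) (v : Fin n → ℂ),
      B.mulVec (B.mulVec v - μ • v) = μ • (B.mulVec v - μ • v) →
      B.mulVec v - μ • v = 0) :
    ∃ (P : Matrix (Fin n) (Fin n) ℂ) (d : Fin n → ℂ),
      IsUnit P.det ∧ B = P⁻¹ * Matrix.diagonal d * P := by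
  set f : Module.End ℂ (Fin n → ℂ) := Matrix.mulVecLin B with hf
  have hfapply : ∀ (μ : ℂ) (x : Fin n → ℂ), (f - μ • 1) x = B.mulVec x - μ • x := by
    intro μ x
    simp [hf, Matrix.mulVecLin_apply]
  have key2' : ∀ (μ : ℂ) (x : Fin n → ℂ),
      (f - μ • 1) ((f - μ • 1) x) = 0 → (f - μ • 1) x = 0 := by
    intro μ x h
    rw [hfapply, hfapply] at h
    rw [hfapply]
    exact key2 μ x (by rw [sub_eq_zero] at h; exact h)
  have hker : ∀ (μ : ℂ) (k : ℕ) (x : Fin n → ℂ),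
      ((f - μ • 1) ^ (k + 1)) x = 0 → (f - μ • 1) x = 0 := by
    intro μ k
    induction k with
    | zero => intro x h; rwa [pow_one] at h
    | succ k ih =>
      intro x h
      have h' : ((f - μ • 1) ^ (k + 1)) ((f - μ • 1) x) = 0 := by
        rw [← Module.End.mul_apply, ← pow_succ]
        exact h
      exact key2' μ x (ih _ h')
  have htop : ⨆ μ : ℂ, f.eigenspace μ = ⊤ := by
    rw [eq_top_iff, ← Module.End.iSup_maxGenEigenspace_eq_top f]
    refine iSup_mono fun μ => ?_
    intro x hx
    rw [Module.End.mem_maxGenEigenspace] at hx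
    obtain ⟨k, hk⟩ := hx
    rw [Module.End.mem_eigenspace_iff]
    cases k with
    | zero =>
      simp only [pow_zero, Module.End.one_apply] at hk
      simp [hk]
    | succ k =>
      have h := hker μ k x hk
      rw [hfapply, sub_eq_zero] at h
      simpa [hf, Matrix.mulVecLin_apply] using h
  have hInd := Module.End.eigenspaces_iSupIndep f
  have hInternal : DirectSum.IsInternal f.eigenspace :=
    DirectSum.isInternal_submodule_of_iSupIndep_of_iSup_eq_top hInd htop
  let bases : ∀ μ : ℂ, Module.Basis (Fin (Module.finrank ℂ (f.eigenspace μ))) ℂ (f.eigenspace μ) :=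
    fun μ => Module.finBasis ℂ _
  let b := hInternal.collectedBasis bases
  haveI : Fintype (Σ μ : ℂ, Fin (Module.finrank ℂ (f.eigenspace μ))) :=
    FiniteDimensional.fintypeBasisIndex b
  have hcardb : Fintype.card (Σ μ : ℂ, Fin (Module.finrank ℂ (f.eigenspace μ))) = n := by
    rw [← Module.finrank_eq_card_basis b, Module.finrank_fintype_fun_eq_card]
    simp
  let e := Fintype.equivFinOfCardEq hcardb
  let b' := b.reindex e
  let d : Fin n → ℂ := fun j => (e.symm j).1
  have heig : ∀ j, B.mulVec (b' j) = d j • (b' j : Fin n → ℂ) := by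
    intro j
    have hmem : (b' j : Fin n → ℂ) ∈ f.eigenspace (d j) := by
      rw [Module.Basis.reindex_apply]
      exact hInternal.collectedBasis_mem bases (e.symm j)
    have := Module.End.mem_eigenspace_iff.mp hmem
    simpa [hf, Matrix.mulVecLin_apply] using this
  let Q := (Pi.basisFun ℂ (Fin n)).toMatrix ⇑b'
  haveI := (Pi.basisFun ℂ (Fin n)).invertibleToMatrix b'
  have hQ : IsUnit Q.det := Matrix.isUnit_det_of_invertible Q
  have hQentry : ∀ i j, Q i j = b' j i := by
    intro i j
    simp [Q, Module.Basis.toMatrix_apply]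
  have hBQ : B * Q = Q * Matrix.diagonal d := by
    ext i j
    rw [Matrix.mul_apply, Matrix.mul_diagonal, hQentry]
    have h := congrFun (heig j) i
    simp only [Matrix.mulVec, dotProduct, Pi.smul_apply, smul_eq_mul] at h
    calc ∑ k, B i k * Q k j = ∑ k, B i k * b' j k := by
          refine Finset.sum_congr rfl fun k _ => by rw [hQentry]
      _ = d j * b' j i := h
      _ = b' j i * d j := mul_comm _ _
  refine ⟨Q⁻¹, d, Matrix.isUnit_nonsing_inv_det Q hQ, ?_⟩
  rw [Matrix.nonsing_inv_nonsing_inv Q hQ]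
  calc B = B * (Q * Q⁻¹) := by rw [Matrix.mul_nonsing_inv Q hQ, mul_one]
    _ = (B * Q) * Q⁻¹ := by rw [Matrix.mul_assoc]
    _ = Q * Matrix.diagonal d * Q⁻¹ := by rw [hBQ]

theorem stmt_0 {n : ℕ} (hn : 1 ≤ n) (A : Matrix (Fin n) (Fin n) ℝ)
    (hA : IsUnit A.det)
    (hK : ∃ K : ℝ, 1 ≤ K ∧ ∀ m : ℕ, 0 < m →
      euclideanOpNorm (A ^ m) ^ n ≤ K * |(A ^ m).det|) :
    (∀ μ₁ μ₂ : ℂ, (A.map Complex.ofReal).charpoly.IsRoot μ₁ →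
        (A.map Complex.ofReal).charpoly.IsRoot μ₂ →
        ‖μ₁‖ = ‖μ₂‖) ∧
    (∃ (P : Matrix (Fin n) (Fin n) ℂ) (d : Fin n → ℂ),
        IsUnit P.det ∧ A.map Complex.ofReal = P⁻¹ * Matrix.diagonal d * P) := by
  obtain ⟨K, hK1, hKb⟩ := hK
  set B := A.map Complex.ofReal with hB
  have hmono := Matrix.charpoly_monic B
  have hBdet : B.det = (A.det : ℂ) := (RingHom.map_det Complex.ofRealHom A).symm
  have hdet0 : (A.det : ℝ) ≠ 0 := hA.ne_zero
  set R := B.charpoly.roots with hR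
  have hcard : Multiset.card R = n := by
    rw [hR, Polynomial.splits_iff_card_roots.mp (IsAlgClosed.splits B.charpoly)]
    simp
  have hmemR : ∀ μ, B.charpoly.IsRoot μ → μ ∈ R := fun μ h =>
    Polynomial.mem_roots'.mpr ⟨hmono.ne_zero, h⟩
  have hrootmem : ∀ μ ∈ R, B.charpoly.IsRoot μ := fun μ h => (Polynomial.mem_roots'.mp h).2
  have habsprod : (R.map (‖·‖)).prod = |A.det| := by
    rw [← abs_multiset_prod, hR, ← Matrix.det_eq_prod_roots_charpoly, hBdet,
      Complex.norm_real, Real.norm_eq_abs]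
  have hRne : R ≠ 0 := by
    intro h; rw [h] at hcard; simp at hcard; omega
  have hTne : R.toFinset.Nonempty := by
    obtain ⟨x, hx⟩ := Multiset.exists_mem_of_ne_zero hRne
    exact ⟨x, Multiset.mem_toFinset.mpr hx⟩
  obtain ⟨μmax, hmaxT, hmax⟩ := R.toFinset.exists_max_image (‖·‖) hTne
  obtain ⟨μmin, hminT, hmin⟩ := R.toFinset.exists_min_image (‖·‖) hTne
  set ρ := ‖μmax‖ with hρ
  set σ := ‖μmin‖ with hσ
  have hmaxR : μmax ∈ R := Multiset.mem_toFinset.mp hmaxT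
  have hminR : μmin ∈ R := Multiset.mem_toFinset.mp hminT
  have habs_le : ∀ μ ∈ R, ‖μ‖ ≤ ρ := fun μ h => hmax μ (Multiset.mem_toFinset.mpr h)
  have hle_abs : ∀ μ ∈ R, σ ≤ ‖μ‖ := fun μ h => hmin μ (Multiset.mem_toFinset.mpr h)
  have hμmin0 : μmin ≠ 0 := by
    intro h0
    have hmem0 : (0 : ℝ) ∈ R.map (‖·‖) :=
      Multiset.mem_map.mpr ⟨μmin, hminR, by simp [h0]⟩
    have := Multiset.prod_eq_zero hmem0
    rw [habsprod] at this
    exact abs_ne_zero.mpr hdet0 this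
  have hσpos : 0 < σ := norm_pos_iff.mpr hμmin0
  have hρpos : 0 < ρ := lt_of_lt_of_le hσpos (hle_abs μmax hmaxR)
  -- lower bound for operator norm
  obtain ⟨vmax, hv0, hveq⟩ := (charpoly_isRoot_iff B μmax).mp (hrootmem μmax hmaxR)
  have hlb : ∀ m, ρ ^ m ≤ euclideanOpNorm (A ^ m) := fun m => eig_pow_lb A hv0 hveq m
  -- product bound
  obtain ⟨R', hR'⟩ := Multiset.exists_cons_of_mem hminR
  have hcard' : Multiset.card R' = n - 1 := by
    rw [hR', Multiset.card_cons] at hcard; omega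
  have hprodle : (R.map (‖·‖)).prod ≤ σ * ρ ^ (n - 1) := by
    rw [hR', Multiset.map_cons, Multiset.prod_cons]
    refine mul_le_mul_of_nonneg_left ?_ (norm_nonneg _)
    calc (R'.map (‖·‖)).prod
        ≤ ρ ^ Multiset.card (R'.map (‖·‖)) := by
          refine prod_le_pow_card' _ _ ?_
          rintro x hx
          obtain ⟨y, hy, rfl⟩ := Multiset.mem_map.mp hx
          exact ⟨norm_nonneg y, habs_le y (by rw [hR']; exact Multiset.mem_cons_of_mem hy)⟩
      _ = ρ ^ (n - 1) := by rw [Multiset.card_map, hcard']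
  have hprodnn : 0 ≤ (R.map (‖·‖)).prod := by rw [habsprod]; positivity
  -- key inequality
  have hρσ : ∀ m : ℕ, 0 < m → ρ ^ m ≤ K * σ ^ m := by
    intro m hm
    have h1 : (ρ ^ m) ^ n ≤ euclideanOpNorm (A ^ m) ^ n :=
      pow_le_pow_left₀ (by positivity) (hlb m) n
    have h2 := hKb m hm
    have h3 : |(A ^ m).det| = ((R.map (‖·‖)).prod) ^ m := by
      rw [Matrix.det_pow, abs_pow, habsprod]
    have h4 : (ρ ^ m) ^ n ≤ K * (σ * ρ ^ (n - 1)) ^ m := by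
      calc (ρ ^ m) ^ n ≤ euclideanOpNorm (A ^ m) ^ n := h1
        _ ≤ K * |(A ^ m).det| := h2
        _ = K * ((R.map (‖·‖)).prod) ^ m := by rw [h3]
        _ ≤ K * (σ * ρ ^ (n - 1)) ^ m := by
            refine mul_le_mul_of_nonneg_left (pow_le_pow_left₀ hprodnn hprodle m) (by linarith)
    have hnm : m * n = m + (n - 1) * m := by
      obtain ⟨k, hk⟩ : ∃ k, n = k + 1 := ⟨n - 1, by omega⟩
      subst hk
      simp [Nat.add_sub_cancel]
      ring_nf
    have h5 : (ρ ^ m) ^ n = ρ ^ m * (ρ ^ (n - 1)) ^ m := by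
      rw [← pow_mul, ← pow_mul, ← pow_add, hnm]
    have h6 : (σ * ρ ^ (n - 1)) ^ m = σ ^ m * (ρ ^ (n - 1)) ^ m := mul_pow _ _ _
    rw [h5, h6] at h4
    have hpos : 0 < (ρ ^ (n - 1)) ^ m := by positivity
    have h7 : ρ ^ m * (ρ ^ (n - 1)) ^ m ≤ (K * σ ^ m) * (ρ ^ (n - 1)) ^ m := by
      calc ρ ^ m * (ρ ^ (n - 1)) ^ m ≤ K * (σ ^ m * (ρ ^ (n - 1)) ^ m) := h4
        _ = (K * σ ^ m) * (ρ ^ (n - 1)) ^ m := by ring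
    exact (mul_le_mul_iff_of_pos_right hpos).mp h7
  have hρσ' : ρ ≤ σ := by
    by_contra hlt
    push_neg at hlt
    have ht : 1 < ρ / σ := (one_lt_div hσpos).mpr hlt
    obtain ⟨m, hm⟩ := pow_unbounded_of_one_lt K ht
    have h := hρσ (m + 1) (Nat.succ_pos m)
    have h2 : (ρ / σ) ^ (m + 1) ≤ K := by
      rw [div_pow, div_le_iff₀ (by positivity)]
      linarith
    have h3 : (ρ / σ) ^ m ≤ (ρ / σ) ^ (m + 1) :=
      pow_le_pow_right₀ (le_of_lt ht) (Nat.le_succ m)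
    linarith
  have habs_eq : ∀ μ ∈ R, ‖μ‖ = ρ := fun μ h =>
    le_antisymm (habs_le μ h) (le_trans hρσ' (hle_abs μ h))
  refine ⟨fun μ₁ μ₂ h1 h2 => by
    rw [habs_eq μ₁ (hmemR _ h1), habs_eq μ₂ (hmemR _ h2)], ?_⟩
  -- Part 2
  have hdetρ : |A.det| = ρ ^ n := by
    rw [← habsprod]
    have : R.map (‖·‖) = Multiset.replicate n ρ := by
      rw [Multiset.eq_replicate]
      constructor
      · rw [Multiset.card_map, hcard]
      · rintro x hx
        obtain ⟨y, hy, rfl⟩ := Multiset.mem_map.mp hx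
        exact habs_eq y hy
    rw [this, Multiset.prod_replicate]
  have hNle : ∀ m, 0 < m → euclideanOpNorm (A ^ m) ≤ K * ρ ^ m := by
    intro m hm
    have h2 := hKb m hm
    rw [Matrix.det_pow, abs_pow, hdetρ, ← pow_mul] at h2
    have h4 : euclideanOpNorm (A ^ m) ^ n ≤ (K * ρ ^ m) ^ n := by
      calc euclideanOpNorm (A ^ m) ^ n ≤ K * ρ ^ (n * m) := h2
        _ ≤ K ^ n * ρ ^ (n * m) := by
            refine mul_le_mul_of_nonneg_right (le_self_pow₀ hK1 (by omega)) (by positivity)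
        _ = (K * ρ ^ m) ^ n := by rw [mul_pow, ← pow_mul, mul_comm m n]
    exact (pow_le_pow_iff_left₀ (norm_nonneg _) (by positivity) (by omega)).mp h4
  refine diag_of_no_gen_eig B ?_
  intro μ v hw
  refine no_gen_eig A K ρ hρpos hNle ?_ μ v hw
  intro ν u hu0 hueq
  exact habs_eq ν (hmemR ν ((charpoly_isRoot_iff B ν).mpr ⟨u, hu0, hueq⟩))
end

section
/- Let n ≥ 1 and let A be an invertible n×n real matrix whose characteristic polynomial has two roots in ℂ of different absolute values. Then ‖A^m‖^n / |det(A^m)| tends to infinity as m → ∞, where ‖·‖ denotes the operator norm with respect to the Euclidean norm on ℝ^n. -/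
open Filter


open Polynomial Matrix in
lemma mem_spectrum_of_isRoot_charpoly {n : ℕ} (B : Matrix (Fin n) (Fin n) ℂ) {μ : ℂ}
    (h : B.charpoly.IsRoot μ) : μ ∈ spectrum ℂ B := by
  rw [spectrum.mem_iff]
  intro hU
  rw [Matrix.isUnit_iff_isUnit_det] at hU
  have hdet : (algebraMap ℂ (Matrix (Fin n) (Fin n) ℂ) μ - B).det = B.charpoly.eval μ := by
    rw [Matrix.charpoly, ← Polynomial.coe_evalRingHom, RingHom.map_det]
    congr 1
    ext i j
    by_cases hij : i = j <;>
      simp [hij, charmatrix_apply, Matrix.algebraMap_matrix_apply, Matrix.diagonal_apply]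
  rw [hdet, h.eq_zero] at hU
  simp at hU

lemma coord_norm_le_euclidean {𝕜 : Type*} [RCLike 𝕜] {n : ℕ} (x : EuclideanSpace 𝕜 (Fin n))
    (j : Fin n) : ‖x j‖ ≤ ‖x‖ := by
  have h := norm_inner_le_norm (𝕜 := 𝕜) (EuclideanSpace.single j (1 : 𝕜)) x
  simpa [EuclideanSpace.inner_single_left, EuclideanSpace.norm_single] using h

open Matrix in
lemma toEuclideanCLM_stdBasisMatrix_norm_le {n : ℕ} (i j : Fin n) (c : ℂ) :
    ‖toEuclideanCLM (𝕜 := ℂ) (single i j c)‖ ≤ ‖c‖ := by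
  refine ContinuousLinearMap.opNorm_le_bound _ (norm_nonneg c) fun x => ?_
  have hx : toEuclideanCLM (𝕜 := ℂ) (single i j c) x
      = EuclideanSpace.single i (c * x j) := by
    ext k
    simp [single_mulVec, Function.update_apply, eq_comm]
  rw [hx, EuclideanSpace.norm_single, norm_mul]
  exact mul_le_mul_of_nonneg_left (coord_norm_le_euclidean x j) (norm_nonneg c)

open Matrix in
lemma entry_abs_le_euclideanOpNorm {n : ℕ} (M : Matrix (Fin n) (Fin n) ℝ) (i j : Fin n) :
    |M i j| ≤ euclideanOpNorm M := by
  have hval : (toEuclideanCLM (𝕜 := ℝ) M (EuclideanSpace.single j (1 : ℝ))) i = M i j := by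
    have h : WithLp.equiv 2 _ (toEuclideanCLM (𝕜 := ℝ) M (EuclideanSpace.single j (1 : ℝ)))
        = toLin' M (WithLp.equiv 2 _ (EuclideanSpace.single j (1 : ℝ))) := rfl
    have h2 := congrFun h i
    rw [toLin'_apply] at h2
    rw [show (WithLp.equiv 2 (Fin n → ℝ)) (EuclideanSpace.single j (1:ℝ)) = Pi.single j 1 from
      rfl] at h2
    rw [Matrix.mulVec_single] at h2
    simpa using h2
  calc |M i j| = ‖(toEuclideanCLM (𝕜 := ℝ) M (EuclideanSpace.single j (1 : ℝ))) i‖ := by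
        rw [hval]; simp
    _ ≤ ‖toEuclideanCLM (𝕜 := ℝ) M (EuclideanSpace.single j (1 : ℝ))‖ :=
        coord_norm_le_euclidean _ i
    _ ≤ ‖toEuclideanCLM (𝕜 := ℝ) M‖ * ‖EuclideanSpace.single j (1 : ℝ)‖ :=
        ContinuousLinearMap.le_opNorm _ _
    _ = euclideanOpNorm M := by rw [EuclideanSpace.norm_single, norm_one, mul_one]; rfl

open Matrix in
lemma opNorm_map_ofReal_le {n : ℕ} (M : Matrix (Fin n) (Fin n) ℝ) :
    ‖toEuclideanCLM (𝕜 := ℂ) (M.map Complex.ofReal)‖ ≤ (n : ℝ) ^ 2 * euclideanOpNorm M := by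
  set B := M.map Complex.ofReal with hB
  calc ‖toEuclideanCLM (𝕜 := ℂ) B‖
      = ‖∑ i : Fin n, ∑ j : Fin n, toEuclideanCLM (𝕜 := ℂ) (single i j (B i j))‖ := by
        conv_lhs => rw [matrix_eq_sum_single B]
        rw [map_sum]
        congr 1
        exact Finset.sum_congr rfl fun i _ => map_sum _ _ _
    _ ≤ ∑ i : Fin n, ∑ j : Fin n, ‖toEuclideanCLM (𝕜 := ℂ) (single i j (B i j))‖ :=
        (norm_sum_le _ _).trans (Finset.sum_le_sum fun i _ => norm_sum_le _ _)
    _ ≤ ∑ _i : Fin n, ∑ _j : Fin n, euclideanOpNorm M := by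
        refine Finset.sum_le_sum fun i _ => Finset.sum_le_sum fun j _ => ?_
        refine (toEuclideanCLM_stdBasisMatrix_norm_le i j (B i j)).trans ?_
        have h : ‖B i j‖ = |M i j| := by simp [hB, Matrix.map_apply]
        rw [h]
        exact entry_abs_le_euclideanOpNorm M i j
    _ = (n : ℝ) ^ 2 * euclideanOpNorm M := by
        simp only [Finset.sum_const, Finset.card_univ, Fintype.card_fin, nsmul_eq_mul]
        ring

lemma multiset_prod_le_pow (s : Multiset ℝ) (Mx : ℝ) (h0 : 0 ≤ Mx)
    (h : ∀ x ∈ s, 0 ≤ x ∧ x ≤ Mx) : s.prod ≤ Mx ^ Multiset.card s := by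
  induction s using Multiset.induction with
  | empty => simp
  | cons a t ih =>
    rw [Multiset.prod_cons, Multiset.card_cons, pow_succ']
    have ha := h a (Multiset.mem_cons_self a t)
    have ht : ∀ x ∈ t, 0 ≤ x ∧ x ≤ Mx := fun x hx => h x (Multiset.mem_cons_of_mem hx)
    exact mul_le_mul ha.2 (ih ht) (Multiset.prod_nonneg fun x hx => (ht x hx).1) h0


theorem stmt_1 {n : ℕ} (hn : 1 ≤ n) (A : Matrix (Fin n) (Fin n) ℝ)
    (hA : IsUnit A.det)
    (hroots : ∃ μ₁ μ₂ : ℂ, (A.map Complex.ofReal).charpoly.IsRoot μ₁ ∧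
      (A.map Complex.ofReal).charpoly.IsRoot μ₂ ∧ ‖μ₁‖ ≠ ‖μ₂‖) :
    Tendsto (fun m : ℕ => euclideanOpNorm (A ^ m) ^ n / |(A ^ m).det|) atTop atTop := by
  classical
  obtain ⟨μ₁, μ₂, h₁, h₂, hne⟩ := hroots
  set B := A.map Complex.ofReal with hBdef
  haveI : Nonempty (Fin n) := ⟨⟨0, hn⟩⟩
  haveI : Nontrivial (EuclideanSpace ℂ (Fin n)) := by
    refine ⟨⟨0, EuclideanSpace.single ⟨0, hn⟩ 1, fun h => ?_⟩⟩
    have := congrArg norm h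
    rw [norm_zero, EuclideanSpace.norm_single, norm_one] at this
    exact zero_ne_one this
  have hchar_ne : B.charpoly ≠ 0 := (Matrix.charpoly_monic B).ne_zero
  have hμ₁R : μ₁ ∈ B.charpoly.roots := by
    rw [Polynomial.mem_roots hchar_ne]; exact h₁
  have hμ₂R : μ₂ ∈ B.charpoly.roots := by
    rw [Polynomial.mem_roots hchar_ne]; exact h₂
  -- determinant facts
  set d : ℝ := |A.det| with hd
  have hd0 : 0 < d := abs_pos.mpr hA.ne_zero
  have hdetB : B.det = (A.det : ℂ) := by
    rw [hBdef]
    exact (RingHom.map_det Complex.ofRealHom A).symm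
  have habs_prod : (B.charpoly.roots.map (‖·‖)).prod = d := by
    have h1 : ‖B.det‖ = d := by rw [hdetB, Complex.norm_real, Real.norm_eq_abs]
    rw [Matrix.det_eq_prod_roots_charpoly] at h1
    rw [← h1]
    exact (map_multiset_prod (normHom : ℂ →*₀ ℝ) _).symm
  -- maximal modulus root
  have hRne : B.charpoly.roots.toFinset.Nonempty := ⟨μ₁, Multiset.mem_toFinset.mpr hμ₁R⟩
  obtain ⟨μ, hμF, hμmax'⟩ := Finset.exists_max_image B.charpoly.roots.toFinset (‖·‖) hRne
  have hμR : μ ∈ B.charpoly.roots := Multiset.mem_toFinset.mp hμF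
  have hμmax : ∀ ρ ∈ B.charpoly.roots, ‖ρ‖ ≤ ‖μ‖ :=
    fun ρ hρ => hμmax' ρ (Multiset.mem_toFinset.mpr hρ)
  obtain ⟨ρ₀, hρ₀R, hρ₀lt⟩ : ∃ ρ ∈ B.charpoly.roots, ‖ρ‖ < ‖μ‖ := by
    rcases lt_or_gt_of_ne hne with h | h
    · exact ⟨μ₁, hμ₁R, lt_of_lt_of_le h (hμmax μ₂ hμ₂R)⟩
    · exact ⟨μ₂, hμ₂R, lt_of_lt_of_le h (hμmax μ₁ hμ₁R)⟩
  set Mx : ℝ := ‖μ‖ with hMx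
  have hMx0 : 0 < Mx := lt_of_le_of_lt (norm_nonneg ρ₀) hρ₀lt
  have hcard : Multiset.card B.charpoly.roots = n := by
    have hsp : B.charpoly.Splits := IsAlgClosed.splits B.charpoly
    rw [(Polynomial.splits_iff_card_roots).mp hsp, Matrix.charpoly_natDegree_eq_dim,
      Fintype.card_fin]
  -- strict product bound
  have key : d < Mx ^ n := by
    have hsplit : B.charpoly.roots = ρ₀ ::ₘ B.charpoly.roots.erase ρ₀ :=
      (Multiset.cons_erase hρ₀R).symm
    have hdval : d = ‖ρ₀‖ * ((B.charpoly.roots.erase ρ₀).map (‖·‖)).prod := by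
      conv_lhs => rw [← habs_prod, hsplit]
      rw [Multiset.map_cons, Multiset.prod_cons]
    have hcard' : Multiset.card (B.charpoly.roots.erase ρ₀) = n - 1 := by
      rw [Multiset.card_erase_of_mem hρ₀R, hcard]
      rfl
    have hbound : ((B.charpoly.roots.erase ρ₀).map (‖·‖)).prod ≤ Mx ^ (n - 1) := by
      have hb := multiset_prod_le_pow ((B.charpoly.roots.erase ρ₀).map (‖·‖)) Mx hMx0.le
        (fun x hx => by
          obtain ⟨ρ, hρ, rfl⟩ := Multiset.mem_map.mp hx
          exact ⟨norm_nonneg _, hμmax ρ (Multiset.mem_of_mem_erase hρ)⟩)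
      rwa [Multiset.card_map, hcard'] at hb
    calc d = ‖ρ₀‖ * ((B.charpoly.roots.erase ρ₀).map (‖·‖)).prod := hdval
      _ ≤ ‖ρ₀‖ * Mx ^ (n - 1) :=
          mul_le_mul_of_nonneg_left hbound (norm_nonneg _)
      _ < Mx * Mx ^ (n - 1) := mul_lt_mul_of_pos_right hρ₀lt (pow_pos hMx0 _)
      _ = Mx ^ n := by rw [← pow_succ', Nat.sub_add_cancel hn]
  -- spectral lower bound
  have hμspec : μ ∈ spectrum ℂ (Matrix.toEuclideanCLM (𝕜 := ℂ) B) := by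
    rw [AlgEquiv.spectrum_eq (Matrix.toEuclideanCLM (𝕜 := ℂ) (n := Fin n)) B]
    exact mem_spectrum_of_isRoot_charpoly B ((Polynomial.mem_roots hchar_ne).mp hμR)
  have hABm : ∀ m : ℕ, (A ^ m).map Complex.ofReal = B ^ m := by
    intro m
    induction m with
    | zero =>
      rw [pow_zero, pow_zero]
      exact Matrix.map_one _ Complex.ofReal_zero Complex.ofReal_one
    | succ k ih =>
      rw [pow_succ, pow_succ, ← ih, hBdef]
      exact Matrix.map_mul (f := Complex.ofRealHom)
  have hEm : ∀ m : ℕ, 1 ≤ m → Mx ^ m ≤ (n : ℝ) ^ 2 * euclideanOpNorm (A ^ m) := by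
    intro m hm
    have hpowmem : μ ^ m ∈ spectrum ℂ ((Matrix.toEuclideanCLM (𝕜 := ℂ) B) ^ m) := by
      rw [spectrum.map_pow_of_pos _ (by omega : 0 < m)]
      exact ⟨μ, hμspec, rfl⟩
    have h1 : ‖μ ^ m‖ ≤ ‖(Matrix.toEuclideanCLM (𝕜 := ℂ) B) ^ m‖ :=
      spectrum.norm_le_norm_of_mem hpowmem
    have h2 : (Matrix.toEuclideanCLM (𝕜 := ℂ) B) ^ m
        = Matrix.toEuclideanCLM (𝕜 := ℂ) ((A ^ m).map Complex.ofReal) := by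
      rw [hABm m, map_pow]
    rw [h2] at h1
    have h3 := opNorm_map_ofReal_le (A ^ m)
    calc Mx ^ m = ‖μ ^ m‖ := by rw [norm_pow]
      _ ≤ ‖Matrix.toEuclideanCLM (𝕜 := ℂ) ((A ^ m).map Complex.ofReal)‖ := h1
      _ ≤ (n : ℝ) ^ 2 * euclideanOpNorm (A ^ m) := h3
  -- conclusion
  have hr : 1 < Mx ^ n / d := (one_lt_div hd0).mpr key
  have hg : Tendsto (fun m : ℕ => (Mx ^ n / d) ^ m / (n : ℝ) ^ (2 * n)) atTop atTop :=
    (tendsto_pow_atTop_atTop_of_one_lt hr).atTop_div_const (by positivity)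
  refine tendsto_atTop_mono' atTop ?_ hg
  filter_upwards [eventually_ge_atTop 1] with m hm
  have hdm : |(A ^ m).det| = d ^ m := by rw [Matrix.det_pow, abs_pow]
  have hn2 : (0 : ℝ) < (n : ℝ) ^ 2 := by positivity
  have hE' : Mx ^ m / (n : ℝ) ^ 2 ≤ euclideanOpNorm (A ^ m) := by
    rw [div_le_iff₀ hn2]
    rw [mul_comm]
    exact hEm m hm
  have hpow : (Mx ^ m / (n : ℝ) ^ 2) ^ n ≤ euclideanOpNorm (A ^ m) ^ n :=
    pow_le_pow_left₀ (by positivity) hE' n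
  have hdmpos : (0 : ℝ) < d ^ m := pow_pos hd0 m
  have hrw : (Mx ^ n / d) ^ m / (n : ℝ) ^ (2 * n)
      = (Mx ^ m / (n : ℝ) ^ 2) ^ n / d ^ m := by
    rw [div_pow, div_pow, ← pow_mul, ← pow_mul, ← pow_mul, div_div, div_div, mul_comm n m]
    ring
  rw [hdm, hrw]
  gcongr
end

section
/- Let n ≥ 1, let λ > 0, and let A be an invertible n×n real matrix which, regarded as a complex matrix, is diagonalizable over ℂ and all of whose eigenvalues (roots in ℂ of its characteristic polynomial) have absolute value λ. Then there exist an invertible n×n real matrix P and an orthogonal n×n real matrix O such that A = P⁻¹·(λO)·P. -/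
open Matrix

open scoped MatrixOrder in
theorem posSemidef_sqrt_aux {n : ℕ} {S : Matrix (Fin n) (Fin n) ℝ} (hS : S.PosSemidef) :
    ∃ P : Matrix (Fin n) (Fin n) ℝ, P * P = S ∧ Pᵀ = P := by
  refine ⟨CFC.sqrt S, CFC.sqrt_mul_sqrt_self S hS.nonneg, ?_⟩
  have := (CFC.sqrt_nonneg S).posSemidef.1
  simpa [Matrix.IsHermitian, Matrix.conjTranspose_eq_transpose_of_trivial] using this

theorem stmt_5 {n : ℕ} (hn : 1 ≤ n) (lam : ℝ) (hlam : 0 < lam)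
    (A : Matrix (Fin n) (Fin n) ℝ) (hA : IsUnit A.det)
    (hdiag : ∃ (Q : Matrix (Fin n) (Fin n) ℂ) (d : Fin n → ℂ),
      IsUnit Q.det ∧ A.map Complex.ofReal = Q⁻¹ * Matrix.diagonal d * Q)
    (hroots : ∀ μ : ℂ, (A.map Complex.ofReal).charpoly.IsRoot μ → ‖μ‖ = lam) :
    ∃ (P O : Matrix (Fin n) (Fin n) ℝ),
      IsUnit P.det ∧ Oᵀ * O = 1 ∧ A = P⁻¹ * (lam • O) * P := by
  obtain ⟨Q, d, hQ, hAc⟩ := hdiag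
  letI := Q.invertibleOfIsUnitDet hQ
  -- Step 1: all diagonal entries have modulus lam
  have hd : ∀ i, ‖d i‖ = lam := by
    intro i
    apply hroots
    have h1 : Polynomial.eval (d i) (A.map Complex.ofReal).charpoly
        = Matrix.det (Matrix.scalar (Fin n) (d i) - A.map Complex.ofReal) := by
      rw [Matrix.charpoly, eval_det, matPolyEquiv_charmatrix]
      simp
    show Polynomial.eval _ _ = 0
    rw [h1, hAc]
    have h2 : Matrix.scalar (Fin n) (d i) - Q⁻¹ * Matrix.diagonal d * Q
        = Q⁻¹ * (Matrix.diagonal (fun j => d i - d j)) * Q := by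
      have h3 : Matrix.diagonal (fun j => d i - d j)
          = Matrix.scalar (Fin n) (d i) - Matrix.diagonal d := by
        rw [← Matrix.diagonal_sub]
        congr 1
      rw [h3, Matrix.mul_sub, Matrix.sub_mul]
      congr 1
      have h4 : Q⁻¹ * Matrix.scalar (Fin n) (d i) = Matrix.scalar (Fin n) (d i) * Q⁻¹ :=
        (Matrix.scalar_commute _ (fun r => Commute.all _ r) _).symm
      rw [h4, Matrix.mul_assoc, Matrix.nonsing_inv_mul Q hQ, Matrix.mul_one]
    rw [h2, Matrix.det_mul, Matrix.det_mul]
    have h5 : Matrix.det (Matrix.diagonal (fun j => d i - d j)) = 0 := by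
      rw [Matrix.det_diagonal]
      exact Finset.prod_eq_zero (Finset.mem_univ i) (by simp)
    rw [h5]; ring
  -- Step 2: the complex invariance identity
  set H : Matrix (Fin n) (Fin n) ℂ := Qᴴ * Q with hHdef
  have key : (A.map Complex.ofReal)ᴴ * H * (A.map Complex.ofReal) = ((lam:ℂ)^2) • H := by
    have hDD : (Matrix.diagonal d)ᴴ * Matrix.diagonal d = ((lam:ℂ)^2) • 1 := by
      rw [Matrix.diagonal_conjTranspose, Matrix.diagonal_mul_diagonal]
      have h6 : ∀ i, (starRingEnd ℂ) (d i) * d i = ((lam:ℂ)^2) := by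
        intro i
        rw [← Complex.normSq_eq_conj_mul_self, ← Complex.sq_norm, hd i]
        push_cast; ring
      ext i j
      by_cases h : i = j <;> simp [h, h6]
    rw [hAc, Matrix.conjTranspose_mul, Matrix.conjTranspose_mul,
      Matrix.conjTranspose_nonsing_inv]
    calc Qᴴ * ((Matrix.diagonal d)ᴴ * Qᴴ⁻¹) * (Qᴴ * Q) * (Q⁻¹ * Matrix.diagonal d * Q)
        = Qᴴ * ((Matrix.diagonal d)ᴴ * (Qᴴ⁻¹ * (Qᴴ * (Q * (Q⁻¹ * (Matrix.diagonal d * Q)))))) := by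
          simp only [Matrix.mul_assoc]
      _ = Qᴴ * ((Matrix.diagonal d)ᴴ * (Matrix.diagonal d * Q)) := by
          rw [Matrix.mul_inv_cancel_left_of_invertible, Matrix.inv_mul_cancel_left_of_invertible]
      _ = Qᴴ * (((Matrix.diagonal d)ᴴ * Matrix.diagonal d) * Q) := by rw [Matrix.mul_assoc]
      _ = ((lam:ℂ)^2) • (Qᴴ * Q) := by
          rw [hDD, Matrix.smul_mul, Matrix.one_mul, Matrix.mul_smul]
  -- the real matrix S
  set S : Matrix (Fin n) (Fin n) ℝ := Matrix.of (fun i j => (H i j).re) with hSdef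
  have hreal : ∀ (M N : Matrix (Fin n) (Fin n) ℝ) (i j : Fin n),
      ((M.map Complex.ofReal * H * N.map Complex.ofReal) i j).re = (M * S * N) i j := by
    intro M N i j
    simp only [Matrix.mul_apply, Matrix.map_apply, hSdef, Matrix.of_apply]
    rw [Complex.re_sum]
    congr 1; ext k
    rw [mul_comm, Complex.re_ofReal_mul, mul_comm, Complex.re_sum]
    congr 1
    refine Finset.sum_congr rfl fun l _ => ?_
    rw [Complex.re_ofReal_mul]
  have hmapT : (Aᵀ).map Complex.ofReal = (A.map Complex.ofReal)ᴴ := by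
    ext i j
    simp [Matrix.conjTranspose_apply, Complex.conj_ofReal]
  -- key real identity
  have hkey : Aᵀ * S * A = (lam^2) • S := by
    ext i j
    have h1 := hreal Aᵀ A i j
    rw [hmapT, key] at h1
    rw [← h1]
    simp only [Matrix.smul_apply, smul_eq_mul]
    rw [← Complex.ofReal_pow, Complex.re_ofReal_mul]
    rfl
  -- S is positive definite
  have hSpos : S.PosDef := by
    refine Matrix.PosDef.of_dotProduct_mulVec_pos ?_ ?_
    · show Sᴴ = S
      ext i j
      have h1 : Hᴴ = H := by
        rw [hHdef, Matrix.conjTranspose_mul, Matrix.conjTranspose_conjTranspose]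
      have h2 : H i j = star (H j i) := by
        conv_lhs => rw [← h1]
        rfl
      simp only [Matrix.conjTranspose_apply, hSdef, Matrix.of_apply, star_trivial]
      rw [h2]
      simp
    · intro x hx
      have hxc : (fun i => (x i : ℂ)) ≠ 0 := by
        intro h
        apply hx
        funext i
        have := congrFun h i
        simpa using this
      have hxS : star x ⬝ᵥ S *ᵥ x = ((fun i => (x i : ℂ)) ⬝ᵥ H *ᵥ (fun i => (x i : ℂ))).re := by
        simp only [star_trivial, Matrix.mulVec, dotProduct, hSdef, Matrix.of_apply]
        rw [Complex.re_sum]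
        congr 1; ext i
        rw [Complex.re_ofReal_mul, Complex.re_sum]
        congr 1
        refine Finset.sum_congr rfl fun l _ => ?_
        simp [mul_comm]
      rw [hxS]
      have hstar : (fun i => (x i : ℂ)) = star (fun i => (x i : ℂ)) := by
        funext i
        simp [Complex.conj_ofReal]
      have hy : Q *ᵥ (fun i => (x i : ℂ)) ≠ 0 := by
        intro h
        exact hxc (((Matrix.mulVec_injective_iff_isUnit.mpr
          ((Matrix.isUnit_iff_isUnit_det Q).mpr hQ)).eq_iff' (Matrix.mulVec_zero Q)).mp h)
      open ComplexOrder in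
      have hpos : (0:ℂ) < star (fun i => (x i : ℂ)) ⬝ᵥ H *ᵥ (fun i => (x i : ℂ)) := by
        rw [hHdef, ← Matrix.mulVec_mulVec, Matrix.dotProduct_mulVec,
          Matrix.vecMul_conjTranspose, star_star]
        exact Matrix.dotProduct_star_self_pos_iff.mpr hy
      have hre := (Complex.lt_def.mp hpos).1
      rw [← hstar] at hre
      simpa using hre
  -- the square root P
  obtain ⟨P, hPP, hPT⟩ := posSemidef_sqrt_aux hSpos.posSemidef
  have hPdet : IsUnit P.det := by
    have h1 : P.det * P.det = S.det := by rw [← Matrix.det_mul, hPP]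
    have h2 : S.det ≠ 0 := ne_of_gt hSpos.det_pos
    refine isUnit_iff_ne_zero.mpr fun h => h2 ?_
    rw [← h1, h, mul_zero]
  letI := P.invertibleOfIsUnitDet hPdet
  have hPiT : P⁻¹ᵀ = P⁻¹ := by rw [Matrix.transpose_nonsing_inv, hPT]
  refine ⟨P, lam⁻¹ • (P * A * P⁻¹), hPdet, ?_, ?_⟩
  · -- orthogonality
    have hOT : (lam⁻¹ • (P * A * P⁻¹))ᵀ = lam⁻¹ • (P⁻¹ * Aᵀ * P) := by
      rw [Matrix.transpose_smul, Matrix.transpose_mul, Matrix.transpose_mul, hPiT, hPT,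
        Matrix.mul_assoc]
    rw [hOT, Matrix.smul_mul, Matrix.mul_smul, smul_smul]
    have hmul : (P⁻¹ * Aᵀ * P) * (P * A * P⁻¹) = P⁻¹ * (Aᵀ * S * A) * P⁻¹ := by
      rw [← hPP]
      simp only [Matrix.mul_assoc]
    rw [hmul, hkey]
    have : P⁻¹ * ((lam ^ 2) • S) * P⁻¹ = (lam^2) • (P⁻¹ * S * P⁻¹) := by
      rw [Matrix.mul_smul, Matrix.smul_mul]
    rw [this, smul_smul]
    rw [show lam⁻¹ * lam⁻¹ * lam ^ 2 = 1 by field_simp, one_smul]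
    have hPS : P⁻¹ * S * P⁻¹ = 1 := by
      rw [← hPP]
      calc P⁻¹ * (P * P) * P⁻¹ = (P⁻¹ * P) * (P * P⁻¹) := by simp only [Matrix.mul_assoc]
        _ = 1 := by
            rw [Matrix.nonsing_inv_mul P hPdet, Matrix.mul_nonsing_inv P hPdet, Matrix.one_mul]
    exact hPS
  · -- A = P⁻¹ * (lam • O) * P
    have h1 : lam • (lam⁻¹ • (P * A * P⁻¹)) = P * A * P⁻¹ := by
      rw [smul_smul, mul_inv_cancel₀ (ne_of_gt hlam), one_smul]
    rw [h1, ← Matrix.mul_assoc, ← Matrix.mul_assoc,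
      Matrix.nonsing_inv_mul P hPdet, Matrix.one_mul, Matrix.mul_assoc,
      Matrix.nonsing_inv_mul P hPdet, Matrix.mul_one]
end

section
/- Let n ≥ 1 and let A be an invertible n×n real matrix such that there exists a constant K ≥ 1 with ‖A^m‖^n ≤ K·|det(A^m)| for all positive integers m, where ‖·‖ denotes the operator norm with respect to the Euclidean norm on ℝ^n. Then there exist λ > 0, an invertible n×n real matrix P, and an orthogonal n×n real matrix O such that A = P⁻¹·(λO)·P. -/
open Matrix

open scoped Matrix.Norms.L2Operator
open scoped MatrixOrder

namespace QCAux

variable {n : ℕ}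

lemma euclideanOpNorm_eq (A : Matrix (Fin n) (Fin n) ℝ) : euclideanOpNorm A = ‖A‖ := rfl

lemma norm_transpose (A : Matrix (Fin n) (Fin n) ℝ) : ‖Aᵀ‖ = ‖A‖ := by
  rw [← Matrix.conjTranspose_eq_transpose_of_trivial]
  exact Matrix.l2_opNorm_conjTranspose A

lemma sum_mulVec {ι : Type*} (s : Finset ι) (G : ι → Matrix (Fin n) (Fin n) ℝ) (x : Fin n → ℝ) :
    (∑ i ∈ s, G i) *ᵥ x = ∑ i ∈ s, G i *ᵥ x := by
  ext j
  simp only [Matrix.mulVec, dotProduct, Matrix.sum_apply, Finset.sum_apply, Finset.sum_mul]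
  rw [Finset.sum_comm]

lemma dotProduct_sum' (x : Fin n → ℝ) {ι : Type*} (s : Finset ι) (v : ι → Fin n → ℝ) :
    dotProduct x (∑ i ∈ s, v i) = ∑ i ∈ s, dotProduct x (v i) := by
  simp only [dotProduct, Finset.sum_apply, Finset.mul_sum]
  rw [Finset.sum_comm]

lemma dot_transpose_mul (X : Matrix (Fin n) (Fin n) ℝ) (x : Fin n → ℝ) :
    dotProduct x ((Xᵀ * X) *ᵥ x) = ‖(EuclideanSpace.equiv (Fin n) ℝ).symm (X *ᵥ x)‖ ^ 2 := by
  rw [← Matrix.mulVec_mulVec, Matrix.dotProduct_mulVec, Matrix.vecMul_transpose,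
    EuclideanSpace.norm_eq, Real.sq_sqrt (by positivity)]
  simp [dotProduct, sq]

end QCAux

open QCAux Filter Topology

theorem stmt_6 {n : ℕ} (hn : 1 ≤ n) (A : Matrix (Fin n) (Fin n) ℝ)
    (hA : IsUnit A.det)
    (hK : ∃ K : ℝ, 1 ≤ K ∧ ∀ m : ℕ, 0 < m →
      euclideanOpNorm (A ^ m) ^ n ≤ K * |(A ^ m).det|) :
    ∃ (lam : ℝ) (P O : Matrix (Fin n) (Fin n) ℝ),
      0 < lam ∧ IsUnit P.det ∧ Oᵀ * O = 1 ∧ A = P⁻¹ * (lam • O) * P := by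
  classical
  obtain ⟨K, hK1, hKm⟩ := hK
  simp only [euclideanOpNorm_eq] at hKm
  have hnne : (n : ℝ) ≠ 0 := Nat.cast_ne_zero.2 (by omega)
  have hd0 : (0 : ℝ) < |A.det| := abs_pos.2 hA.ne_zero
  set d : ℝ := |A.det| with hd
  set lam : ℝ := d ^ ((n : ℝ)⁻¹) with hlam
  have hlam0 : 0 < lam := Real.rpow_pos_of_pos hd0 _
  have hlamn : lam ^ n = d := by
    rw [hlam, ← Real.rpow_natCast (d ^ ((n : ℝ)⁻¹)) n, ← Real.rpow_mul hd0.le,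
      inv_mul_cancel₀ hnne, Real.rpow_one]
  set B : Matrix (Fin n) (Fin n) ℝ := lam⁻¹ • A with hB
  have hBpow : ∀ m : ℕ, B ^ m = (lam⁻¹) ^ m • A ^ m := fun m => smul_pow _ _ _
  have hlamd : ∀ m : ℕ, (lam⁻¹) ^ (m * n) * d ^ m = 1 := by
    intro m
    rw [inv_pow, mul_comm m n, pow_mul, hlamn]
    field_simp
  have hdetB : ∀ m : ℕ, |(B ^ m).det| = 1 := by
    intro m
    have h1 : (B ^ m).det = (lam⁻¹) ^ (m * n) * A.det ^ m := by
      rw [hBpow, Matrix.det_smul, Fintype.card_fin, Matrix.det_pow, ← pow_mul]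
    rw [h1, abs_mul, abs_pow, abs_inv, abs_of_pos hlam0, abs_pow, ← hd, hlamd m]
  have hdetBu : ∀ m : ℕ, IsUnit (B ^ m).det := by
    intro m
    refine isUnit_iff_ne_zero.2 fun h => ?_
    have := hdetB m
    rw [h, abs_zero] at this
    norm_num at this
  set L : ℝ := K ^ ((n : ℝ)⁻¹) with hL
  have hK0 : (0 : ℝ) < K := lt_of_lt_of_le one_pos hK1
  have hL1 : 1 ≤ L := Real.one_le_rpow hK1 (by positivity)
  have hLn : L ^ n = K := by
    rw [hL, ← Real.rpow_natCast (K ^ ((n : ℝ)⁻¹)) n, ← Real.rpow_mul hK0.le,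
      inv_mul_cancel₀ hnne, Real.rpow_one]
  have hnormB : ∀ m : ℕ, 0 < m → ‖B ^ m‖ ≤ L := by
    intro m hm
    have key : ‖B ^ m‖ ^ n ≤ L ^ n := by
      rw [hLn]
      have hAm : |(A ^ m).det| = d ^ m := by rw [Matrix.det_pow, abs_pow]
      have h2 : ‖B ^ m‖ = (lam⁻¹) ^ m * ‖A ^ m‖ := by
        rw [hBpow, norm_smul, Real.norm_eq_abs, abs_pow, abs_inv, abs_of_pos hlam0]
      calc ‖B ^ m‖ ^ n = (lam⁻¹) ^ (m * n) * ‖A ^ m‖ ^ n := by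
            rw [h2, mul_pow, ← pow_mul]
        _ ≤ (lam⁻¹) ^ (m * n) * (K * d ^ m) := by
            have := hKm m hm
            rw [hAm] at this
            exact mul_le_mul_of_nonneg_left this (by positivity)
        _ = K * ((lam⁻¹) ^ (m * n) * d ^ m) := by ring
        _ = K := by rw [hlamd m, mul_one]
    exact (pow_le_pow_iff_left₀ (norm_nonneg _) (by positivity) (by omega)).1 key
  -- uniform bound on inverses
  obtain ⟨C0, hC0⟩ := (isCompact_closedBall (0 : Matrix (Fin n) (Fin n) ℝ) L).exists_bound_of_continuousOn
      ((continuous_id.matrix_adjugate).continuousOn (s := Metric.closedBall 0 L))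
  set C : ℝ := max C0 1 with hC
  have hCpos : (0 : ℝ) < C := lt_of_lt_of_le one_pos (le_max_right _ _)
  have hinv : ∀ m : ℕ, 0 < m → ‖(B ^ m)⁻¹‖ ≤ C := by
    intro m hm
    rw [Matrix.inv_def, Ring.inverse_eq_inv, norm_smul, Real.norm_eq_abs, abs_inv, hdetB m,
      inv_one, one_mul]
    refine le_trans (hC0 _ ?_) (le_max_left _ _)
    rw [Metric.mem_closedBall, dist_zero_right]
    exact hnormB m hm
  set c : ℝ := (C ^ 2)⁻¹ with hc
  have hcpos : 0 < c := by positivity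
  -- lower bound on the quadratic forms
  have hlow : ∀ m : ℕ, 0 < m → ∀ x : Fin n → ℝ,
      c * ‖(EuclideanSpace.equiv (Fin n) ℝ).symm x‖ ^ 2 ≤ dotProduct x (((B ^ m)ᵀ * B ^ m) *ᵥ x) := by
    intro m hm x
    rw [dot_transpose_mul]
    set y : Fin n → ℝ := B ^ m *ᵥ x with hy
    have hxy : (B ^ m)⁻¹ *ᵥ y = x := by
      rw [hy, Matrix.mulVec_mulVec, Matrix.nonsing_inv_mul _ (hdetBu m), Matrix.one_mulVec]
    have h2 : ‖(EuclideanSpace.equiv (Fin n) ℝ).symm x‖ ≤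
        C * ‖(EuclideanSpace.equiv (Fin n) ℝ).symm y‖ := by
      calc ‖(EuclideanSpace.equiv (Fin n) ℝ).symm x‖
          = ‖(EuclideanSpace.equiv (Fin n) ℝ).symm ((B ^ m)⁻¹ *ᵥ ((EuclideanSpace.equiv (Fin n) ℝ).symm y))‖ := by
            rw [show ((B ^ m)⁻¹ *ᵥ ((EuclideanSpace.equiv (Fin n) ℝ).symm y) : Fin n → ℝ)
              = (B ^ m)⁻¹ *ᵥ y from rfl, hxy]
        _ ≤ ‖(B ^ m)⁻¹‖ * ‖(EuclideanSpace.equiv (Fin n) ℝ).symm y‖ :=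
            Matrix.l2_opNorm_mulVec _ _
        _ ≤ C * ‖(EuclideanSpace.equiv (Fin n) ℝ).symm y‖ :=
            mul_le_mul_of_nonneg_right (hinv m hm) (norm_nonneg _)
    have h3 := pow_le_pow_left₀ (norm_nonneg _) h2 2
    rw [mul_pow] at h3
    rw [hc]
    have hC2 : (0:ℝ) < C ^ 2 := by positivity
    rw [inv_mul_le_iff₀ hC2]
    linarith [h3]
  -- averaged Gram matrices
  set g : ℕ → Matrix (Fin n) (Fin n) ℝ := fun m => (B ^ m)ᵀ * B ^ m with hg
  have hgnorm : ∀ m : ℕ, 0 < m → ‖g m‖ ≤ L ^ 2 := by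
    intro m hm
    calc ‖(B ^ m)ᵀ * B ^ m‖ ≤ ‖(B ^ m)ᵀ‖ * ‖B ^ m‖ := Matrix.l2_opNorm_mul _ _
      _ = ‖B ^ m‖ * ‖B ^ m‖ := by rw [norm_transpose]
      _ ≤ L * L := mul_le_mul (hnormB m hm) (hnormB m hm) (norm_nonneg _) (by linarith)
      _ = L ^ 2 := (sq L).symm
  set f : ℕ → Matrix (Fin n) (Fin n) ℝ := fun N => (N : ℝ)⁻¹ • ∑ m ∈ Finset.range N, g (m + 1)
    with hf
  have hfnorm : ∀ N : ℕ, ‖f N‖ ≤ L ^ 2 := by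
    intro N
    rcases Nat.eq_zero_or_pos N with h | h
    · subst h
      simp only [hf, Finset.range_zero, Finset.sum_empty, smul_zero, norm_zero]
      positivity
    · have hsum : ‖∑ m ∈ Finset.range N, g (m + 1)‖ ≤ (N : ℝ) * L ^ 2 := by
        refine le_trans (norm_sum_le _ _) ?_
        calc ∑ m ∈ Finset.range N, ‖g (m + 1)‖ ≤ ∑ _m ∈ Finset.range N, L ^ 2 :=
              Finset.sum_le_sum fun m _ => hgnorm (m + 1) (Nat.succ_pos m)
          _ = (N : ℝ) * L ^ 2 := by rw [Finset.sum_const, Finset.card_range, nsmul_eq_mul]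
      calc ‖f N‖ = (N : ℝ)⁻¹ * ‖∑ m ∈ Finset.range N, g (m + 1)‖ := by
            rw [hf, norm_smul, Real.norm_eq_abs, abs_inv, Nat.abs_cast]
        _ ≤ (N : ℝ)⁻¹ * ((N : ℝ) * L ^ 2) :=
            mul_le_mul_of_nonneg_left hsum (by positivity)
        _ = L ^ 2 := by
            field_simp
  obtain ⟨M, -, φ, hφ, hMlim⟩ := tendsto_subseq_of_bounded
    (Metric.isBounded_closedBall (x := (0 : Matrix (Fin n) (Fin n) ℝ)) (r := L ^ 2))
    (fun N => Metric.mem_closedBall.mpr (by rw [dist_zero_right]; exact hfnorm N))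
  -- symmetry
  have hfsymm : ∀ N : ℕ, (f N)ᵀ = f N := by
    intro N
    simp only [hf]
    simp only [Matrix.transpose_smul, Matrix.transpose_sum, hg, Matrix.transpose_mul,
      Matrix.transpose_transpose]
  have hMsymm : Mᵀ = M := by
    have h1 : Filter.Tendsto (fun N => (f (φ N))ᵀ) atTop (nhds Mᵀ) :=
      ((continuous_id.matrix_transpose).tendsto M).comp hMlim
    have h2 : (fun N => (f (φ N))ᵀ) = fun N => f (φ N) := funext fun N => hfsymm _
    rw [h2] at h1
    exact tendsto_nhds_unique h1 hMlim
  -- lower bound for the limit quadratic form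
  have hquad : ∀ x : Fin n → ℝ,
      c * ‖(EuclideanSpace.equiv (Fin n) ℝ).symm x‖ ^ 2 ≤ dotProduct x (M *ᵥ x) := by
    intro x
    have hstep : ∀ N : ℕ, 1 ≤ N →
        c * ‖(EuclideanSpace.equiv (Fin n) ℝ).symm x‖ ^ 2 ≤ dotProduct x (f N *ᵥ x) := by
      intro N hN
      have hNpos : (0 : ℝ) < (N : ℝ) := by exact_mod_cast hN
      have hrepr : dotProduct x (f N *ᵥ x)
          = (N : ℝ)⁻¹ * ∑ m ∈ Finset.range N, dotProduct x (g (m + 1) *ᵥ x) := by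
        simp only [hf]
        rw [Matrix.smul_mulVec, dotProduct_smul, smul_eq_mul,
          sum_mulVec, dotProduct_sum']
      rw [hrepr]
      have hterm : ∀ m ∈ Finset.range N,
          c * ‖(EuclideanSpace.equiv (Fin n) ℝ).symm x‖ ^ 2 ≤ dotProduct x (g (m + 1) *ᵥ x) :=
        fun m _ => hlow (m + 1) (Nat.succ_pos m) x
      have hsum := Finset.card_nsmul_le_sum (Finset.range N)
        (fun m => dotProduct x (g (m + 1) *ᵥ x)) _ hterm
      rw [Finset.card_range, nsmul_eq_mul] at hsum
      rw [le_inv_mul_iff₀ hNpos]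
      exact hsum
    have hcont : Filter.Tendsto (fun N => dotProduct x (f (φ N) *ᵥ x)) atTop
        (nhds (dotProduct x (M *ᵥ x))) :=
      ((continuous_const.dotProduct (continuous_id.matrix_mulVec
        continuous_const)).tendsto M).comp hMlim
    refine ge_of_tendsto hcont ?_
    filter_upwards [Filter.eventually_ge_atTop 1] with N hN
    exact hstep (φ N) (le_trans hN (hφ.le_apply))
  -- invariance
  have hBgB : ∀ m : ℕ, Bᵀ * g (m + 1) * B = g (m + 2) := by
    intro m
    show Bᵀ * ((B ^ (m + 1))ᵀ * B ^ (m + 1)) * B = (B ^ (m + 2))ᵀ * B ^ (m + 2)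
    have h : B ^ (m + 2) = B ^ (m + 1) * B := pow_succ B (m + 1)
    rw [h, Matrix.transpose_mul]
    simp only [Matrix.mul_assoc]
  have hrec : ∀ N : ℕ, Bᵀ * f N * B = f N + (N : ℝ)⁻¹ • (g (N + 1) - g 1) := by
    intro N
    simp only [hf]
    rw [mul_smul_comm ((N : ℝ)⁻¹) Bᵀ (∑ m ∈ Finset.range N, g (m + 1)),
      smul_mul_assoc ((N : ℝ)⁻¹) (Bᵀ * ∑ m ∈ Finset.range N, g (m + 1)) B,
      Finset.mul_sum, Finset.sum_mul]
    have hterm : ∀ m, Bᵀ * g (m + 1) * B = g (m + 2) := hBgB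
    have hs : ∑ m ∈ Finset.range N, Bᵀ * g (m + 1) * B = ∑ m ∈ Finset.range N, g (m + 2) := by
      exact Finset.sum_congr rfl fun m _ => hterm m
    have htel : ∑ m ∈ Finset.range N, g (m + 2)
        = (∑ m ∈ Finset.range N, g (m + 1)) + (g (N + 1) - g 1) := by
      have h1 := Finset.sum_range_succ' (fun i => g (i + 1)) N
      have h2 := Finset.sum_range_succ (fun i => g (i + 1)) N
      rw [h2] at h1
      simp only [zero_add] at h1
      -- h1 : Σ_{i<N} g (i+1) + g (N+1) = Σ_{i<N} g (i+1+1) + g 1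
      have h3 : ∑ m ∈ Finset.range N, g (m + 2) = ∑ i ∈ Finset.range N, g (i + 1 + 1) := rfl
      have h4 : ∑ i ∈ Finset.range N, g (i + 1 + 1)
          = ∑ i ∈ Finset.range N, g (i + 1) + g (N + 1) - g 1 := by
        rw [h1]; abel
      rw [h3, h4]
      abel
    rw [hs, htel, smul_add]
  have hinvar : Bᵀ * M * B = M := by
    have h1 : Filter.Tendsto (fun N => Bᵀ * f (φ N) * B) atTop (nhds (Bᵀ * M * B)) :=
      (((continuous_const.matrix_mul continuous_id).matrix_mul continuous_const).tendsto M).comp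
        hMlim
    have h2 : Filter.Tendsto (fun N => Bᵀ * f (φ N) * B) atTop (nhds M) := by
      have hz : Filter.Tendsto
          (fun N => ((φ N : ℝ))⁻¹ • (g (φ N + 1) - g 1)) atTop (nhds 0) := by
        have hb : Filter.Tendsto (fun N => ((φ N : ℝ))⁻¹ * (2 * L ^ 2)) atTop (nhds 0) := by
          have h3 : Filter.Tendsto (fun N => ((φ N : ℝ))⁻¹) atTop (nhds 0) :=
            tendsto_inv_atTop_zero.comp
              (tendsto_natCast_atTop_atTop.comp hφ.tendsto_atTop)
          simpa using h3.mul_const (2 * L ^ 2)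
        refine squeeze_zero_norm (fun N => ?_) hb
        rw [norm_smul, Real.norm_eq_abs, abs_inv, Nat.abs_cast]
        refine mul_le_mul_of_nonneg_left ?_ (by positivity)
        calc ‖g (φ N + 1) - g 1‖ ≤ ‖g (φ N + 1)‖ + ‖g 1‖ := norm_sub_le _ _
          _ ≤ L ^ 2 + L ^ 2 := add_le_add (hgnorm _ (Nat.succ_pos _)) (hgnorm 1 one_pos)
          _ = 2 * L ^ 2 := by ring
      have := hMlim.add hz
      rw [add_zero] at this
      refine this.congr fun N => ?_
      rw [Function.comp_apply, ← hrec (φ N)]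
    exact tendsto_nhds_unique h1 h2
  -- positive definiteness
  have hMposdef : M.PosDef := by
    refine Matrix.PosDef.of_dotProduct_mulVec_pos ?_ ?_
    · rw [Matrix.IsHermitian, Matrix.conjTranspose_eq_transpose_of_trivial, hMsymm]
    · intro x hx
      have hq := hquad x
      have hx' : (EuclideanSpace.equiv (Fin n) ℝ).symm x ≠ 0 := by
        simpa using hx
      have hxpos : 0 < ‖(EuclideanSpace.equiv (Fin n) ℝ).symm x‖ := norm_pos_iff.2 hx'
      have : (0 : ℝ) < c * ‖(EuclideanSpace.equiv (Fin n) ℝ).symm x‖ ^ 2 := by positivity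
      calc (0 : ℝ) < c * ‖(EuclideanSpace.equiv (Fin n) ℝ).symm x‖ ^ 2 := this
        _ ≤ dotProduct x (M *ᵥ x) := hq
        _ = dotProduct (star x) (M *ᵥ x) := by rw [star_trivial]
  -- square root
  set P : Matrix (Fin n) (Fin n) ℝ := CFC.sqrt M with hP
  have hPP : P * P = M := CFC.sqrt_mul_sqrt_self M hMposdef.posSemidef.nonneg
  have hPsymm : Pᵀ = P := by
    have := (CFC.sqrt_nonneg M).posSemidef.1
    rwa [Matrix.IsHermitian, Matrix.conjTranspose_eq_transpose_of_trivial] at this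
  have hdetP : IsUnit P.det := by
    have hdet : P.det * P.det = M.det := by rw [← Matrix.det_mul, hPP]
    have hMdet : 0 < M.det := hMposdef.det_pos
    refine isUnit_iff_ne_zero.2 fun h => ?_
    rw [h, mul_zero] at hdet
    rw [← hdet] at hMdet
    exact lt_irrefl _ hMdet
  set O : Matrix (Fin n) (Fin n) ℝ := P * B * P⁻¹ with hO
  have hPtinv : (P⁻¹)ᵀ = P⁻¹ := by rw [Matrix.transpose_nonsing_inv, hPsymm]
  have hOT : Oᵀ = P⁻¹ * Bᵀ * P := by
    rw [hO, Matrix.transpose_mul, Matrix.transpose_mul, hPtinv, hPsymm, Matrix.mul_assoc]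
  have hOrth : Oᵀ * O = 1 := by
    calc Oᵀ * O = P⁻¹ * (Bᵀ * (P * P * B)) * P⁻¹ := by
          rw [hOT, hO]; simp only [Matrix.mul_assoc]
      _ = P⁻¹ * (Bᵀ * M * B) * P⁻¹ := by rw [hPP, ← Matrix.mul_assoc Bᵀ M B]
      _ = P⁻¹ * M * P⁻¹ := by rw [hinvar]
      _ = P⁻¹ * (P * (P * P⁻¹)) := by rw [← hPP]; simp only [Matrix.mul_assoc]
      _ = 1 := by
          rw [Matrix.mul_nonsing_inv _ hdetP, Matrix.mul_one, Matrix.nonsing_inv_mul _ hdetP]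
  refine ⟨lam, P, O, hlam0, hdetP, hOrth, ?_⟩
  have hPBP : P⁻¹ * (P * B * P⁻¹) * P = B := by
    calc P⁻¹ * (P * B * P⁻¹) * P = (P⁻¹ * P) * B * (P⁻¹ * P) := by
          simp only [Matrix.mul_assoc]
      _ = B := by rw [Matrix.nonsing_inv_mul _ hdetP, Matrix.one_mul, Matrix.mul_one]
  calc A = lam • B := by rw [hB, smul_smul, mul_inv_cancel₀ hlam0.ne', one_smul]
    _ = lam • (P⁻¹ * (P * B * P⁻¹) * P) := by rw [hPBP]
    _ = P⁻¹ * (lam • O) * P := by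
        rw [hO, mul_smul_comm lam P⁻¹ (P * B * P⁻¹),
          smul_mul_assoc lam (P⁻¹ * (P * B * P⁻¹)) P]
end

section
/- Let E be a finite-dimensional real inner product space, let λ > 1, let O : E → E be a linear isometry (orthogonal transformation), let P : E → E be a continuous linear equivalence, and define the linear map ψ = P⁻¹ ∘ (λ·O) ∘ P. Suppose G : E → E satisfies G(0) = 0, G ∘ ψ = ψ ∘ G, and G is differentiable at 0 with derivative D. Then G(x) = D(x) for all x ∈ E; in particular, G is linear. -/
theorem stmt_8 {E : Type*} [NormedAddCommGroup E] [InnerProductSpace ℝ E]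
    [FiniteDimensional ℝ E] (lam : ℝ) (hlam : 1 < lam)
    (O : E →ₗᵢ[ℝ] E) (P : E ≃L[ℝ] E)
    (ψ : E →L[ℝ] E)
    (hψ : ψ = (P.symm : E →L[ℝ] E).comp
      ((lam • O.toContinuousLinearMap).comp (P : E →L[ℝ] E)))
    (G : E → E) (hG0 : G 0 = 0) (hcomm : ∀ x, G (ψ x) = ψ (G x))
    (D : E →L[ℝ] E) (hD : HasFDerivAt G D 0) :
    ∀ x, G x = D x := by
  have hlam0 : (0:ℝ) < lam := lt_trans one_pos hlam
  set Oe : E ≃ₗᵢ[ℝ] E := O.toLinearIsometryEquiv rfl with hOe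
  have hOeapp : ∀ z, Oe z = O z := fun z => rfl
  -- inverse map
  set φ : E → E := fun x => P.symm (lam⁻¹ • Oe.symm (P x)) with hφ
  have hψapp : ∀ y, ψ y = P.symm (lam • O (P y)) := by
    intro y; rw [hψ]; rfl
  have hψφ : ∀ x, ψ (φ x) = x := by
    intro x
    rw [hψapp, hφ]
    simp only [ContinuousLinearEquiv.apply_symm_apply]
    rw [← hOeapp, map_smul Oe, Oe.apply_symm_apply, smul_smul,
      mul_inv_cancel₀ (ne_of_gt hlam0), one_smul, ContinuousLinearEquiv.symm_apply_apply]
  -- D commutes with ψ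
  have hψ0 : ψ 0 = 0 := map_zero ψ
  have hDψ : D.comp ψ = ψ.comp D := by
    have h1 : HasFDerivAt (G ∘ ψ) (D.comp ψ) 0 := by
      have hD' : HasFDerivAt G D (ψ 0) := by rwa [hψ0]
      exact hD'.comp 0 (ψ.hasFDerivAt (x := (0:E)))
    have h2 : HasFDerivAt (G ∘ ψ) (ψ.comp D) 0 := by
      have h3 : HasFDerivAt (fun x => ψ (G x)) (ψ.comp D) 0 := by
        have := (ψ.hasFDerivAt (x := G 0)).comp (x := (0:E)) hD
        exact this
      have : (fun x => ψ (G x)) = G ∘ ψ := by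
        funext y; exact (hcomm y).symm
      rwa [this] at h3
    exact h1.unique h2
  have hDψ' : ∀ y, D (ψ y) = ψ (D y) := fun y => DFunLike.congr_fun hDψ y
  set r : E → E := fun y => G y - D y with hr
  have hrψ : ∀ y, r (ψ y) = ψ (r y) := by
    intro y; simp only [hr, hcomm, hDψ', map_sub]
  have hriter : ∀ k y, r (ψ^[k] y) = ψ^[k] (r y) := by
    intro k
    induction k with
    | zero => intro y; simp
    | succ n ih =>
      intro y
      rw [Function.iterate_succ_apply', Function.iterate_succ_apply', hrψ, ih]
  have hψφiter : ∀ k x, ψ^[k] (φ^[k] x) = x := by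
    intro k
    induction k with
    | zero => intro x; simp
    | succ n ih =>
      intro x
      rw [Function.iterate_succ_apply, Function.iterate_succ_apply', hψφ, ih]
  -- norm identities
  have hPψ : ∀ y, ‖P (ψ y)‖ = lam * ‖P y‖ := by
    intro y
    rw [hψapp]
    simp only [ContinuousLinearEquiv.apply_symm_apply]
    rw [norm_smul, O.norm_map, Real.norm_eq_abs, abs_of_pos hlam0]
  have hPφ : ∀ x, ‖P (φ x)‖ = lam⁻¹ * ‖P x‖ := by
    intro x
    rw [hφ]
    simp only [ContinuousLinearEquiv.apply_symm_apply]
    rw [norm_smul, Oe.symm.norm_map, Real.norm_eq_abs, abs_of_pos (inv_pos.mpr hlam0)]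
  have hPψk : ∀ k y, ‖P (ψ^[k] y)‖ = lam ^ k * ‖P y‖ := by
    intro k
    induction k with
    | zero => intro y; simp
    | succ n ih =>
      intro y
      rw [Function.iterate_succ_apply', hPψ, ih, pow_succ]; ring
  have hPφk : ∀ k x, ‖P (φ^[k] x)‖ = (lam⁻¹) ^ k * ‖P x‖ := by
    intro k
    induction k with
    | zero => intro x; simp
    | succ n ih =>
      intro x
      rw [Function.iterate_succ_apply', hPφ, ih, pow_succ]; ring
  set C1 : ℝ := ‖(P.symm : E →L[ℝ] E)‖ with hC1
  set C2 : ℝ := ‖(P : E →L[ℝ] E)‖ with hC2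
  have hC1nn : 0 ≤ C1 := norm_nonneg _
  have hC2nn : 0 ≤ C2 := norm_nonneg _
  have hy1 : ∀ y : E, ‖y‖ ≤ C1 * ‖P y‖ := by
    intro y
    have := (P.symm : E →L[ℝ] E).le_opNorm (P y)
    simpa using this
  have hy2 : ∀ y : E, ‖P y‖ ≤ C2 * ‖y‖ := fun y => (P : E →L[ℝ] E).le_opNorm y
  set C : ℝ := C1 * C2 with hC
  have hCnn : 0 ≤ C := mul_nonneg hC1nn hC2nn
  -- little-o
  have hlo : ∀ c : ℝ, 0 < c → ∃ δ > 0, ∀ y : E, ‖y‖ < δ → ‖r y‖ ≤ c * ‖y‖ := by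
    intro c hc
    have h := hD.isLittleO
    have h2 := (h.def hc)
    rw [Metric.eventually_nhds_iff] at h2
    obtain ⟨δ, hδ, hball⟩ := h2
    refine ⟨δ, hδ, fun y hy => ?_⟩
    have := hball (by simpa [dist_eq_norm] using hy)
    simpa [hG0, hr] using this
  intro x
  have key : ∀ ε : ℝ, 0 < ε → ‖r x‖ ≤ ε := by
    intro ε hε
    have hden : (0:ℝ) < C ^ 2 * ‖x‖ + 1 := by positivity
    set ε' : ℝ := ε / (C ^ 2 * ‖x‖ + 1) with hε'def
    have hε' : 0 < ε' := div_pos hε hden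
    obtain ⟨δ, hδ, hsmall⟩ := hlo ε' hε'
    -- choose k
    have hinvlt : lam⁻¹ < 1 := inv_lt_one_of_one_lt₀ hlam
    have hinvnn : (0:ℝ) ≤ lam⁻¹ := le_of_lt (inv_pos.mpr hlam0)
    have hCx : (0:ℝ) < C * ‖x‖ + 1 := by positivity
    obtain ⟨k, hk⟩ := exists_pow_lt_of_lt_one (div_pos hδ hCx) hinvlt
    set yk : E := φ^[k] x with hyk
    have hykn : ‖yk‖ ≤ lam⁻¹ ^ k * (C * ‖x‖) := by
      calc ‖yk‖ ≤ C1 * ‖P yk‖ := hy1 _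
        _ = C1 * (lam⁻¹ ^ k * ‖P x‖) := by rw [hyk, hPφk]
        _ ≤ C1 * (lam⁻¹ ^ k * (C2 * ‖x‖)) := by
            apply mul_le_mul_of_nonneg_left _ hC1nn
            exact mul_le_mul_of_nonneg_left (hy2 x) (by positivity)
        _ = lam⁻¹ ^ k * (C * ‖x‖) := by rw [hC]; ring
    have hyklt : ‖yk‖ < δ := by
      calc ‖yk‖ ≤ lam⁻¹ ^ k * (C * ‖x‖) := hykn
        _ ≤ lam⁻¹ ^ k * (C * ‖x‖ + 1) := by nlinarith [pow_nonneg hinvnn k]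
        _ < δ / (C * ‖x‖ + 1) * (C * ‖x‖ + 1) := mul_lt_mul_of_pos_right hk hCx
        _ = δ := div_mul_cancel₀ _ (ne_of_gt hCx)
    have hrx : r x = ψ^[k] (r yk) := by
      conv_lhs => rw [← hψφiter k x]
      rw [hriter]
    have hbound : ‖r x‖ ≤ C * (lam ^ k * ‖r yk‖) := by
      rw [hrx]
      calc ‖ψ^[k] (r yk)‖ ≤ C1 * ‖P (ψ^[k] (r yk))‖ := hy1 _
        _ = C1 * (lam ^ k * ‖P (r yk)‖) := by rw [hPψk]
        _ ≤ C1 * (lam ^ k * (C2 * ‖r yk‖)) := by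
            apply mul_le_mul_of_nonneg_left _ hC1nn
            exact mul_le_mul_of_nonneg_left (hy2 _) (by positivity)
        _ = C * (lam ^ k * ‖r yk‖) := by rw [hC]; ring
    have hrk : ‖r yk‖ ≤ ε' * (lam⁻¹ ^ k * (C * ‖x‖)) :=
      le_trans (hsmall yk hyklt) (mul_le_mul_of_nonneg_left hykn (le_of_lt hε'))
    have hcancel : lam ^ k * lam⁻¹ ^ k = 1 := by
      rw [← mul_pow, mul_inv_cancel₀ (ne_of_gt hlam0), one_pow]
    calc ‖r x‖ ≤ C * (lam ^ k * ‖r yk‖) := hbound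
      _ ≤ C * (lam ^ k * (ε' * (lam⁻¹ ^ k * (C * ‖x‖)))) := by
          apply mul_le_mul_of_nonneg_left _ hCnn
          exact mul_le_mul_of_nonneg_left hrk (by positivity)
      _ = (lam ^ k * lam⁻¹ ^ k) * (ε' * (C ^ 2 * ‖x‖)) := by ring
      _ = ε' * (C ^ 2 * ‖x‖) := by rw [hcancel, one_mul]
      _ ≤ ε' * (C ^ 2 * ‖x‖ + 1) := by nlinarith
      _ = ε := div_mul_cancel₀ _ (ne_of_gt hden)
  have : ‖r x‖ ≤ 0 := le_of_forall_pos_le_add (by intro ε hε; simpa using key ε hε)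
  have h0 : r x = 0 := norm_le_zero_iff.mp this
  have := sub_eq_zero.mp h0
  simpa [hr] using this
end
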